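/- For every positive integer δ, the identity P_{2δ}(A,B,C) + 3A·P_{2δ−1}(A,B,C) + (−1)^δ·A·(A+B+C)·Poly_{δ−1,δ,δ}(A,B)·Poly_{δ−1,δ,δ}(A,C) = 0 holds in ℤ[A,B,C]. -/

import Mathlib

noncomputable section

/-- The variables `A`, `B`, `C` of `ℤ[A,B,C]`. -/
def pA : MvPolynomial (Fin 3) ℤ := MvPolynomial.X 0
def pB : MvPolynomial (Fin 3) ℤ := MvPolynomial.X 1
def pC : MvPolynomial (Fin 3) ℤ := MvPolynomial.X 2

/-- `Poly_{d,a,b}(A,B) = Σ_{i=0}^{d} (−1)^i C(a+d−i,a) C(b+i,b) A^{d−i} B^i`. -/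
def PolyDAB (d a b : ℕ) (A B : MvPolynomial (Fin 3) ℤ) : MvPolynomial (Fin 3) ℤ :=
  ∑ i ∈ Finset.range (d + 1),
    MvPolynomial.C ((-1 : ℤ) ^ i * ((a + d - i).choose a : ℤ) * ((b + i).choose b : ℤ)) *
      A ^ (d - i) * B ^ i

/-- The polynomial `𝔓_{2δ−1}(A,B,C)`. -/
def frakPodd (δ : ℕ) : MvPolynomial (Fin 3) ℤ :=
  MvPolynomial.C ((-1 : ℤ) ^ δ) *
      (pA * PolyDAB (δ - 1) δ (δ - 1) pA pB * PolyDAB (δ - 1) δ (δ - 1) pA pC)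
    + pB * PolyDAB (δ - 1) δ (δ - 1) pB pA * PolyDAB (δ - 1) δ (δ - 1) pA pC
    + pC * PolyDAB (δ - 1) δ (δ - 1) pA pB * PolyDAB (δ - 1) δ (δ - 1) pC pA

/-- The polynomial `𝔓_{2δ}(A,B,C)`. -/
def frakPeven (δ : ℕ) : MvPolynomial (Fin 3) ℤ :=
  MvPolynomial.C ((-1 : ℤ) ^ (δ + 1)) *
      (PolyDAB δ δ δ pA pB * PolyDAB δ δ δ pA pC)
    + pB * PolyDAB (δ - 1) δ δ pB pA * PolyDAB δ δ δ pA pC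
    + pC * PolyDAB δ δ δ pA pB * PolyDAB (δ - 1) δ δ pC pA

/-- `P_{2δ−1}(A,B,C) = 𝔓_{2δ−1}(A,B,C) + (−1)^{δ+1} C(2δ,δ) C(3δ−1,δ−1) A^{2δ−1}`. -/
def Podd (δ : ℕ) : MvPolynomial (Fin 3) ℤ :=
  frakPodd δ +
    MvPolynomial.C ((-1 : ℤ) ^ (δ + 1) * ((2 * δ).choose δ : ℤ) *
      ((3 * δ - 1).choose (δ - 1) : ℤ)) * pA ^ (2 * δ - 1)

/-- `P_{2δ}(A,B,C) = 𝔓_{2δ}(A,B,C) + (−1)^δ C(2δ,δ) C(3δ,δ) A^{2δ}`. -/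
def Peven (δ : ℕ) : MvPolynomial (Fin 3) ℤ :=
  frakPeven δ +
    MvPolynomial.C ((-1 : ℤ) ^ δ * ((2 * δ).choose δ : ℤ) * ((3 * δ).choose δ : ℤ)) *
      pA ^ (2 * δ)



def Sc (d j : ℕ) : ℕ := (2*d-1-j).choose d * ((d+j).choose d)
def Rc (d j : ℕ) : ℕ := (2*d-j).choose d * ((d+j).choose d)
def Qc (d j : ℕ) : ℕ := (2*d-1-j).choose d * ((d-1+j).choose (d-1))
def QQc (d j : ℕ) : ℕ := (d+j-1).choose d * ((2*d-1-j).choose (d-1))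
def SSc (d j : ℕ) : ℕ := (2*d-j).choose d * ((d+j-1).choose d)

-- (d-j) * C(2d-j,d) = (2d-j) * C(2d-1-j,d)
lemma b1 (d j : ℕ) (hd : 1 ≤ d) (hj : j ≤ d) :
    (d-j) * ((2*d-j).choose d) = (2*d-j) * ((2*d-1-j).choose d) := by
  have h := Nat.choose_mul_succ_eq (2*d-1-j) d
  rw [show 2*d-1-j+1 = 2*d-j from by omega, show 2*d-j-d = d-j from by omega] at h
  rw [mul_comm ((2*d-j).choose d) (d-j)] at h
  rw [← h, mul_comm]

-- (d+j) * C(d-1+j,d-1) = d * C(d+j,d)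
lemma b2 (d j : ℕ) (hd : 1 ≤ d) :
    (d+j) * ((d-1+j).choose (d-1)) = d * ((d+j).choose d) := by
  have h := Nat.add_one_mul_choose_eq (d-1+j) (d-1)
  rw [show d-1+j+1 = d+j from by omega,
      show d-1+1 = d from by omega] at h
  rw [h, mul_comm]

-- (d+j) * C(d+j-1,d) = j * C(d+j,d)
lemma b3 (d j : ℕ) (hd : 1 ≤ d) :
    (d+j) * ((d+j-1).choose d) = j * ((d+j).choose d) := by
  have h := Nat.choose_mul_succ_eq (d+j-1) d
  rw [show d+j-1+1 = d+j from by omega, show d+j-d = j from by omega] at h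
  rw [mul_comm ((d+j).choose d) j] at h
  rw [mul_comm, h]

-- (d-j) * C(2d-1-j,d-1) = d * C(2d-1-j,d)
lemma b4 (d j : ℕ) (hd : 1 ≤ d) (hj : j ≤ d) :
    (d-j) * ((2*d-1-j).choose (d-1)) = d * ((2*d-1-j).choose d) := by
  have h := Nat.choose_succ_right_eq (2*d-1-j) (d-1)
  rw [show d-1+1 = d from by omega, show 2*d-1-j-(d-1) = d-j from by omega] at h
  rw [mul_comm, mul_comm d _, h]

lemma relR (d j : ℕ) (hd : 1 ≤ d) (hj : j ≤ d) :
    (d-j) * Rc d j = (2*d-j) * Sc d j := by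
  unfold Rc Sc
  calc (d-j) * ((2*d-j).choose d * ((d+j).choose d))
      = ((d-j) * ((2*d-j).choose d)) * ((d+j).choose d) := by ring
    _ = ((2*d-j) * ((2*d-1-j).choose d)) * ((d+j).choose d) := by rw [b1 d j hd hj]
    _ = (2*d-j) * ((2*d-1-j).choose d * ((d+j).choose d)) := by ring

lemma relQ (d j : ℕ) (hd : 1 ≤ d) :
    (d+j) * Qc d j = d * Sc d j := by
  unfold Qc Sc
  calc (d+j) * ((2*d-1-j).choose d * ((d-1+j).choose (d-1)))
      = ((d+j) * ((d-1+j).choose (d-1))) * ((2*d-1-j).choose d) := by ring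
    _ = (d * ((d+j).choose d)) * ((2*d-1-j).choose d) := by rw [b2 d j hd]
    _ = d * ((2*d-1-j).choose d * ((d+j).choose d)) := by ring

lemma relQQ (d j : ℕ) (hd : 1 ≤ d) (hj : j ≤ d) :
    ((d+j)*(d-j)) * QQc d j = (d*j) * Sc d j := by
  unfold QQc Sc
  calc ((d+j)*(d-j)) * ((d+j-1).choose d * ((2*d-1-j).choose (d-1)))
      = ((d+j) * ((d+j-1).choose d)) * ((d-j) * ((2*d-1-j).choose (d-1))) := by ring
    _ = (j * ((d+j).choose d)) * (d * ((2*d-1-j).choose d)) := by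
        rw [b3 d j hd, b4 d j hd hj]
    _ = (d*j) * ((2*d-1-j).choose d * ((d+j).choose d)) := by ring

lemma relSS (d j : ℕ) (hd : 1 ≤ d) (hj : j ≤ d) :
    ((d+j)*(d-j)) * SSc d j = (j*(2*d-j)) * Sc d j := by
  unfold SSc Sc
  calc ((d+j)*(d-j)) * ((2*d-j).choose d * ((d+j-1).choose d))
      = ((d+j) * ((d+j-1).choose d)) * ((d-j) * ((2*d-j).choose d)) := by ring
    _ = (j * ((d+j).choose d)) * ((2*d-j) * ((2*d-1-j).choose d)) := by
        rw [b3 d j hd, b1 d j hd hj]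
    _ = (j*(2*d-j)) * ((2*d-1-j).choose d * ((d+j).choose d)) := by ring

-- ℚ versions
lemma qcast (d j : ℕ) (hj : j ≤ d) : ((d - j : ℕ) : ℚ) = (d:ℚ) - j := by
  push_cast [Nat.cast_sub hj]; ring

lemma qR (d j : ℕ) (hd : 1 ≤ d) (hj : j < d) :
    (Rc d j : ℚ) = (2*d - j) * (Sc d j) / (d - j) := by
  have h := relR d j hd hj.le
  have h' : ((d:ℚ) - j) * (Rc d j) = (2*(d:ℚ) - j) * (Sc d j) := by
    have := congrArg (Nat.cast : ℕ → ℚ) h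
    push_cast [Nat.cast_sub hj.le, Nat.cast_sub (show j ≤ 2*d by omega)] at this
    linarith [this]
  have hne : ((d:ℚ) - j) ≠ 0 := by
    have : (j:ℚ) < d := by exact_mod_cast hj
    linarith
  rw [eq_div_iff hne]; linarith [h']

lemma qQ (d j : ℕ) (hd : 1 ≤ d) :
    (Qc d j : ℚ) = d * (Sc d j) / (d + j) := by
  have h := relQ d j hd
  have h' : ((d:ℚ) + j) * (Qc d j) = (d:ℚ) * (Sc d j) := by exact_mod_cast congrArg (Nat.cast : ℕ → ℚ) h
  have hne : ((d:ℚ) + j) ≠ 0 := by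
    have h1 : (1:ℚ) ≤ (d:ℚ) := by exact_mod_cast hd
    have h2 : (0:ℚ) ≤ (j:ℚ) := by positivity
    linarith
  rw [eq_div_iff hne]; linarith [h']

lemma qQQ (d j : ℕ) (hd : 1 ≤ d) (hj : j < d) :
    (QQc d j : ℚ) = d * j * (Sc d j) / ((d + j) * (d - j)) := by
  have h := relQQ d j hd hj.le
  have h' : (((d:ℚ) + j) * ((d:ℚ) - j)) * (QQc d j) = ((d:ℚ) * j) * (Sc d j) := by
    have := congrArg (Nat.cast : ℕ → ℚ) h
    push_cast [Nat.cast_sub hj.le] at this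
    linarith [this]
  have hne1 : ((d:ℚ) + j) ≠ 0 := by
    have h1 : (1:ℚ) ≤ (d:ℚ) := by exact_mod_cast hd
    have h2 : (0:ℚ) ≤ (j:ℚ) := by positivity
    linarith
  have hne2 : ((d:ℚ) - j) ≠ 0 := by
    have : (j:ℚ) < d := by exact_mod_cast hj
    linarith
  rw [eq_div_iff (mul_ne_zero hne1 hne2)]; linarith [h']

lemma qSS (d j : ℕ) (hd : 1 ≤ d) (hj : j < d) :
    (SSc d j : ℚ) = j * (2*d - j) * (Sc d j) / ((d + j) * (d - j)) := by
  have h := relSS d j hd hj.le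
  have h' : (((d:ℚ) + j) * ((d:ℚ) - j)) * (SSc d j) = ((j:ℚ) * (2*(d:ℚ) - j)) * (Sc d j) := by
    have := congrArg (Nat.cast : ℕ → ℚ) h
    push_cast [Nat.cast_sub hj.le, Nat.cast_sub (show j ≤ 2*d by omega)] at this
    linarith [this]
  have hne1 : ((d:ℚ) + j) ≠ 0 := by
    have h1 : (1:ℚ) ≤ (d:ℚ) := by exact_mod_cast hd
    have h2 : (0:ℚ) ≤ (j:ℚ) := by positivity
    linarith
  have hne2 : ((d:ℚ) - j) ≠ 0 := by
    have : (j:ℚ) < d := by exact_mod_cast hj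
    linarith
  rw [eq_div_iff (mul_ne_zero hne1 hne2)]; linarith [h']

-- boundary values
lemma vSc (d : ℕ) (hd : 1 ≤ d) : Sc d d = 0 := by
  unfold Sc
  rw [Nat.choose_eq_zero_of_lt (show 2*d-1-d < d from by omega), zero_mul]

lemma vQc (d : ℕ) (hd : 1 ≤ d) : Qc d d = 0 := by
  unfold Qc
  rw [Nat.choose_eq_zero_of_lt (show 2*d-1-d < d from by omega), zero_mul]

lemma vSS0 (d : ℕ) (hd : 1 ≤ d) : SSc d 0 = 0 := by
  unfold SSc
  rw [Nat.choose_eq_zero_of_lt (show d+0-1 < d from by omega), mul_zero]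

lemma vQQ0 (d : ℕ) (hd : 1 ≤ d) : QQc d 0 = 0 := by
  unfold QQc
  rw [Nat.choose_eq_zero_of_lt (show d+0-1 < d from by omega), zero_mul]

lemma central (d : ℕ) (hd : 1 ≤ d) : (2*d).choose d = 2 * ((2*d-1).choose d) := by
  have hs := Nat.choose_symm (show d ≤ 2*d-1 from by omega)
  rw [show 2*d-1-d = d-1 from by omega] at hs
  have h := Nat.add_one_mul_choose_eq (2*d-1) (d-1)
  rw [show 2*d-1+1 = 2*d from by omega,
      show d-1+1 = d from by omega] at h
  apply Nat.eq_of_mul_eq_mul_right (show 0 < d from hd)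
  calc (2*d).choose d * d = 2*d * ((2*d-1).choose (d-1)) := h.symm
    _ = 2*d * ((2*d-1).choose d) := by rw [hs]
    _ = 2 * ((2*d-1).choose d) * d := by ring

lemma vRc (d : ℕ) (hd : 1 ≤ d) : Rc d d = 2 * SSc d d := by
  unfold Rc SSc
  rw [show 2*d-d = d from by omega, Nat.choose_self, one_mul, one_mul,
      show d+d-1 = 2*d-1 from by omega, show d+d = 2*d from by omega]
  exact central d hd

lemma vQQd (d : ℕ) (hd : 1 ≤ d) : QQc d d = SSc d d := by
  unfold QQc SSc
  rw [show 2*d-1-d = d-1 from by omega, Nat.choose_self, show d+d-1 = 2*d-1 from by omega,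
      show 2*d-d = d from by omega, Nat.choose_self, mul_one, one_mul]

lemma choose3 (d : ℕ) (hd : 1 ≤ d) : (3*d).choose d = 3 * ((3*d-1).choose (d-1)) := by
  have h := Nat.add_one_mul_choose_eq (3*d-1) (d-1)
  rw [show 3*d-1+1 = 3*d from by omega,
      show d-1+1 = d from by omega] at h
  apply Nat.eq_of_mul_eq_mul_right (show 0 < d from hd)
  calc (3*d).choose d * d = 3*d * ((3*d-1).choose (d-1)) := h.symm
    _ = 3 * ((3*d-1).choose (d-1)) * d := by ring

-- the "row" identity
lemma qrow (d k : ℕ) (hd : 1 ≤ d) (hk : k ≤ d) :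
    (Rc d k : ℚ) + (Sc d k : ℚ) = 2 * (SSc d k : ℚ) + 3 * (Qc d k : ℚ) := by
  rcases eq_or_lt_of_le hk with hkd | hkd
  · rw [hkd]
    push_cast [vSc d hd, vQc d hd, vRc d hd]
    ring
  · rw [qR d k hd hkd, qQ d k hd, qSS d k hd hkd]
    have h1 : (1:ℚ) ≤ (d:ℚ) := by exact_mod_cast hd
    have h2 : (0:ℚ) ≤ (k:ℚ) := by positivity
    have h3 : (k:ℚ) < d := by exact_mod_cast hkd
    have hne1 : ((d:ℚ) + k) ≠ 0 := by linarith
    have hne2 : ((d:ℚ) - k) ≠ 0 := by linarith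
    field_simp
    ring

-- main coefficient identity over ℚ
lemma qE (d j k : ℕ) (hd : 1 ≤ d) (hj : j ≤ d) (hk : k ≤ d) :
    (Sc d j : ℚ) * Sc d k + SSc d j * Rc d k + Rc d j * SSc d k
      + 3*((Qc d j : ℚ) * Qc d k) + 3*((QQc d j : ℚ) * Qc d k) + 3*((Qc d j : ℚ) * QQc d k)
    = (Rc d j : ℚ) * Rc d k + SSc d j * Sc d k + Sc d j * SSc d k := by
  rcases eq_or_lt_of_le hj with hjd | hjd
  · rw [hjd]
    push_cast [vSc d hd, vQc d hd, vRc d hd, vQQd d hd]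
    linear_combination (-(SSc d d : ℚ)) * qrow d k hd hk
  · rcases eq_or_lt_of_le hk with hkd | hkd
    · rw [hkd]
      push_cast [vSc d hd, vQc d hd, vRc d hd, vQQd d hd]
      linear_combination (-(SSc d d : ℚ)) * qrow d j hd hj
    · rw [qR d j hd hjd, qR d k hd hkd, qQ d j hd, qQ d k hd, qQQ d j hd hjd,
          qQQ d k hd hkd, qSS d j hd hjd, qSS d k hd hkd]
      have h1 : (1:ℚ) ≤ (d:ℚ) := by exact_mod_cast hd
      have h2 : (0:ℚ) ≤ (j:ℚ) := by positivity
      have h2' : (0:ℚ) ≤ (k:ℚ) := by positivity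
      have h3 : (j:ℚ) < d := by exact_mod_cast hjd
      have h3' : (k:ℚ) < d := by exact_mod_cast hkd
      have hne1 : ((d:ℚ) + j) ≠ 0 := by linarith
      have hne2 : ((d:ℚ) - j) ≠ 0 := by linarith
      have hne3 : ((d:ℚ) + k) ≠ 0 := by linarith
      have hne4 : ((d:ℚ) - k) ≠ 0 := by linarith
      field_simp
      ring

lemma negpow_sub (a b : ℕ) (h : a ≤ b) : ((-1:ℤ))^(b-a) = (-1)^b * (-1)^a := by
  have h2 : ((-1:ℤ))^a * (-1)^a = 1 := by
    rw [← pow_add, show a+a = 2*a from by omega, pow_mul]; norm_num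
  calc ((-1:ℤ))^(b-a) = (-1)^(b-a) * ((-1)^a * (-1)^a) := by rw [h2, mul_one]
    _ = ((-1)^(b-a) * (-1)^a) * (-1)^a := by ring
    _ = (-1)^b * (-1)^a := by rw [← pow_add, show b-a+a = b from by omega]

lemma shift_sign (d j : ℕ) (hd : 1 ≤ d) :
    ((-1:ℤ))^(j-1) * (SSc d j : ℤ) = -((-1:ℤ)^j * (SSc d j : ℤ)) := by
  cases j with
  | zero => rw [vSS0 d hd]; norm_num
  | succ n =>
      rw [show n+1-1 = n from by omega, pow_succ]
      ring

lemma totzero (d j k : ℕ) (hd : 1 ≤ d) (hj : j ≤ d) (hk : k ≤ d) :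
    (-1:ℤ)^(d+1) * ((-1:ℤ)^j * (Rc d j : ℤ)) * ((-1:ℤ)^k * (Rc d k : ℤ))
  + ((-1:ℤ)^(d-j) * (SSc d j : ℤ)) * ((-1:ℤ)^k * (Rc d k : ℤ))
  + ((-1:ℤ)^j * (Rc d j : ℤ)) * ((-1:ℤ)^(d-k) * (SSc d k : ℤ))
  + 3 * ((-1:ℤ)^d * ((-1:ℤ)^j * (Qc d j : ℤ)) * ((-1:ℤ)^k * (Qc d k : ℤ)))
  + 3 * (((-1:ℤ)^(d-j) * (QQc d j : ℤ)) * ((-1:ℤ)^k * (Qc d k : ℤ)))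
  + 3 * (((-1:ℤ)^j * (Qc d j : ℤ)) * ((-1:ℤ)^(d-k) * (QQc d k : ℤ)))
  + (-1:ℤ)^d * ((-1:ℤ)^j * (Sc d j : ℤ)) * ((-1:ℤ)^k * (Sc d k : ℤ))
  + (-1:ℤ)^d * ((-1:ℤ)^(j-1) * (SSc d j : ℤ)) * ((-1:ℤ)^k * (Sc d k : ℤ))
  + (-1:ℤ)^d * ((-1:ℤ)^j * (Sc d j : ℤ)) * ((-1:ℤ)^(k-1) * (SSc d k : ℤ)) = 0 := by
  have E : (Sc d j : ℤ) * Sc d k + SSc d j * Rc d k + Rc d j * SSc d k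
      + 3*((Qc d j : ℤ) * Qc d k) + 3*((QQc d j : ℤ) * Qc d k) + 3*((Qc d j : ℤ) * QQc d k)
    = (Rc d j : ℤ) * Rc d k + SSc d j * Sc d k + Sc d j * SSc d k := by
    exact_mod_cast qE d j k hd hj hk
  rw [negpow_sub j d hj, negpow_sub k d hk, shift_sign d j hd, shift_sign d k hd]
  linear_combination ((-1:ℤ)^d * (-1:ℤ)^j * (-1:ℤ)^k) * E

open Finset MvPolynomial in
lemma nf_R (d : ℕ) (Y : MvPolynomial (Fin 3) ℤ) :
    PolyDAB d d d pA Y = ∑ j ∈ Finset.range (d+1),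
      MvPolynomial.C ((-1:ℤ)^j * (Rc d j : ℤ)) * pA^(d-j) * Y^j := by
  rw [PolyDAB]
  refine Finset.sum_congr rfl fun i hi => ?_
  simp only [Finset.mem_range] at hi
  rw [show d + d - i = 2*d - i from by omega]
  simp only [Rc]
  push_cast
  simp only [map_mul]
  ring

open Finset MvPolynomial in
lemma nf_S (d : ℕ) (hd : 1 ≤ d) (Y : MvPolynomial (Fin 3) ℤ) :
    pA * PolyDAB (d-1) d d pA Y = ∑ j ∈ Finset.range (d+1),
      MvPolynomial.C ((-1:ℤ)^j * (Sc d j : ℤ)) * pA^(d-j) * Y^j := by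
  rw [Finset.sum_range_succ, vSc d hd]
  simp only [Nat.cast_zero, mul_zero, map_zero, zero_mul, add_zero]
  rw [PolyDAB, show d - 1 + 1 = d from by omega, Finset.mul_sum]
  refine Finset.sum_congr rfl fun i hi => ?_
  simp only [Finset.mem_range] at hi
  rw [show d + (d-1) - i = 2*d-1-i from by omega]
  have hA : pA * pA^(d-1-i) = pA^(d-i) := by
    rw [← pow_succ']
    congr 1
    omega
  calc pA * (MvPolynomial.C ((-1:ℤ)^i * ((2*d-1-i).choose d : ℤ) * ((d+i).choose d : ℤ)) *
        pA^(d-1-i) * Y^i)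
      = MvPolynomial.C ((-1:ℤ)^i * ((2*d-1-i).choose d : ℤ) * ((d+i).choose d : ℤ)) *
        (pA * pA^(d-1-i)) * Y^i := by ring
    _ = _ := by rw [hA]; simp only [Sc]; push_cast; simp only [map_mul]; ring

open Finset MvPolynomial in
lemma nf_Q (d : ℕ) (hd : 1 ≤ d) (Y : MvPolynomial (Fin 3) ℤ) :
    pA * PolyDAB (d-1) d (d-1) pA Y = ∑ j ∈ Finset.range (d+1),
      MvPolynomial.C ((-1:ℤ)^j * (Qc d j : ℤ)) * pA^(d-j) * Y^j := by
  rw [Finset.sum_range_succ, vQc d hd]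
  simp only [Nat.cast_zero, mul_zero, map_zero, zero_mul, add_zero]
  rw [PolyDAB, show d - 1 + 1 = d from by omega, Finset.mul_sum]
  refine Finset.sum_congr rfl fun i hi => ?_
  simp only [Finset.mem_range] at hi
  rw [show d + (d-1) - i = 2*d-1-i from by omega]
  have hA : pA * pA^(d-1-i) = pA^(d-i) := by
    rw [← pow_succ']
    congr 1
    omega
  calc pA * (MvPolynomial.C ((-1:ℤ)^i * ((2*d-1-i).choose d : ℤ) * ((d-1+i).choose (d-1) : ℤ)) *
        pA^(d-1-i) * Y^i)
      = MvPolynomial.C ((-1:ℤ)^i * ((2*d-1-i).choose d : ℤ) * ((d-1+i).choose (d-1) : ℤ)) *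
        (pA * pA^(d-1-i)) * Y^i := by ring
    _ = _ := by rw [hA]; simp only [Qc]; push_cast; simp only [map_mul]; ring

open Finset MvPolynomial in
lemma nf_SS (d : ℕ) (hd : 1 ≤ d) (Y : MvPolynomial (Fin 3) ℤ) :
    Y * PolyDAB (d-1) d d Y pA = ∑ j ∈ Finset.range (d+1),
      MvPolynomial.C ((-1:ℤ)^(d-j) * (SSc d j : ℤ)) * pA^(d-j) * Y^j := by
  rw [Finset.sum_range_succ', vSS0 d hd]
  simp only [Nat.cast_zero, mul_zero, map_zero, zero_mul, add_zero]
  rw [PolyDAB, show d - 1 + 1 = d from by omega, ← Finset.sum_range_reflect, Finset.mul_sum]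
  refine Finset.sum_congr rfl fun i hi => ?_
  simp only [Finset.mem_range] at hi
  rw [show d + (d-1) - (d-1-i) = d + i from by omega,
      show d + (d-1-i) = 2*d-1-i from by omega,
      show (d-1) - (d-1-i) = i from by omega,
      show d - (i+1) = d-1-i from by omega]
  simp only [SSc]
  rw [show 2*d - (i+1) = 2*d-1-i from by omega, show d+(i+1)-1 = d+i from by omega]
  push_cast
  simp only [map_mul]
  ring

open Finset MvPolynomial in
lemma nf_QQ (d : ℕ) (hd : 1 ≤ d) (Y : MvPolynomial (Fin 3) ℤ) :
    Y * PolyDAB (d-1) d (d-1) Y pA = ∑ j ∈ Finset.range (d+1),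
      MvPolynomial.C ((-1:ℤ)^(d-j) * (QQc d j : ℤ)) * pA^(d-j) * Y^j := by
  rw [Finset.sum_range_succ', vQQ0 d hd]
  simp only [Nat.cast_zero, mul_zero, map_zero, zero_mul, add_zero]
  rw [PolyDAB, show d - 1 + 1 = d from by omega, ← Finset.sum_range_reflect, Finset.mul_sum]
  refine Finset.sum_congr rfl fun i hi => ?_
  simp only [Finset.mem_range] at hi
  rw [show d + (d-1) - (d-1-i) = d + i from by omega,
      show (d-1) + (d-1-i) = 2*d-2-i from by omega,
      show (d-1) - (d-1-i) = i from by omega,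
      show d - (i+1) = d-1-i from by omega]
  simp only [QQc]
  rw [show 2*d-1 - (i+1) = 2*d-2-i from by omega, show d+(i+1)-1 = d+i from by omega]
  push_cast
  simp only [map_mul]
  ring

open Finset MvPolynomial in
lemma nf_shift (d : ℕ) (hd : 1 ≤ d) (Y : MvPolynomial (Fin 3) ℤ) :
    Y * PolyDAB (d-1) d d pA Y = ∑ j ∈ Finset.range (d+1),
      MvPolynomial.C ((-1:ℤ)^(j-1) * (SSc d j : ℤ)) * pA^(d-j) * Y^j := by
  rw [Finset.sum_range_succ', vSS0 d hd]
  simp only [Nat.cast_zero, mul_zero, map_zero, zero_mul, add_zero]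
  rw [PolyDAB, show d - 1 + 1 = d from by omega, Finset.mul_sum]
  refine Finset.sum_congr rfl fun i hi => ?_
  simp only [Finset.mem_range] at hi
  rw [show d + (d-1) - i = 2*d-1-i from by omega,
      show (i+1) - 1 = i from by omega,
      show d - (i+1) = d-1-i from by omega]
  simp only [SSc]
  rw [show 2*d - (i+1) = 2*d-1-i from by omega, show d+(i+1)-1 = d+i from by omega]
  push_cast
  simp only [map_mul]
  ring

open Finset MvPolynomial in
lemma nf_mul (d : ℕ) (F G : ℕ → ℤ) (f g : MvPolynomial (Fin 3) ℤ)
    (hf : f = ∑ j ∈ Finset.range (d+1), MvPolynomial.C (F j) * pA^(d-j) * pB^j)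
    (hg : g = ∑ k ∈ Finset.range (d+1), MvPolynomial.C (G k) * pA^(d-k) * pC^k) :
    f * g = ∑ j ∈ Finset.range (d+1), ∑ k ∈ Finset.range (d+1),
      MvPolynomial.C (F j * G k) * (pA^(2*d-j-k) * pB^j * pC^k) := by
  subst hf hg
  rw [Finset.sum_mul_sum]
  refine Finset.sum_congr rfl fun j hj => ?_
  refine Finset.sum_congr rfl fun k hk => ?_
  simp only [Finset.mem_range] at hj hk
  have hA : pA^(d-j) * pA^(d-k) = pA^(2*d-j-k) := by
    rw [← pow_add]
    congr 1
    omega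
  calc MvPolynomial.C (F j) * pA^(d-j) * pB^j * (MvPolynomial.C (G k) * pA^(d-k) * pC^k)
      = MvPolynomial.C (F j) * MvPolynomial.C (G k) * (pA^(d-j) * pA^(d-k)) * pB^j * pC^k := by
        ring
    _ = MvPolynomial.C (F j) * MvPolynomial.C (G k) * pA^(2*d-j-k) * pB^j * pC^k := by rw [hA]
    _ = MvPolynomial.C (F j * G k) * (pA^(2*d-j-k) * pB^j * pC^k) := by
        rw [map_mul]; ring

open Finset MvPolynomial in
lemma nf_smul_mul (d : ℕ) (s : ℤ) (F G : ℕ → ℤ) (f g : MvPolynomial (Fin 3) ℤ)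
    (hf : f = ∑ j ∈ Finset.range (d+1), MvPolynomial.C (F j) * pA^(d-j) * pB^j)
    (hg : g = ∑ k ∈ Finset.range (d+1), MvPolynomial.C (G k) * pA^(d-k) * pC^k) :
    MvPolynomial.C s * (f * g) = ∑ j ∈ Finset.range (d+1), ∑ k ∈ Finset.range (d+1),
      MvPolynomial.C (s * F j * G k) * (pA^(2*d-j-k) * pB^j * pC^k) := by
  rw [nf_mul d F G f g hf hg, Finset.mul_sum]
  refine Finset.sum_congr rfl fun j hj => ?_
  rw [Finset.mul_sum]
  refine Finset.sum_congr rfl fun k hk => ?_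
  rw [map_mul, map_mul, map_mul]
  ring

open Finset MvPolynomial in
lemma C3mul (x : ℤ) : (MvPolynomial.C (3*x) : MvPolynomial (Fin 3) ℤ) = 3 * MvPolynomial.C x := by
  rw [map_mul, map_ofNat]

open Finset MvPolynomial in
lemma bigsum (d : ℕ) (hd : 1 ≤ d) :
    (∑ j ∈ Finset.range (d+1), ∑ k ∈ Finset.range (d+1),
      MvPolynomial.C ((-1:ℤ)^(d+1) * ((-1:ℤ)^j * (Rc d j : ℤ)) * ((-1:ℤ)^k * (Rc d k : ℤ))) *
        (pA^(2*d-j-k) * pB^j * pC^k))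
  + (∑ j ∈ Finset.range (d+1), ∑ k ∈ Finset.range (d+1),
      MvPolynomial.C (((-1:ℤ)^(d-j) * (SSc d j : ℤ)) * ((-1:ℤ)^k * (Rc d k : ℤ))) *
        (pA^(2*d-j-k) * pB^j * pC^k))
  + (∑ j ∈ Finset.range (d+1), ∑ k ∈ Finset.range (d+1),
      MvPolynomial.C (((-1:ℤ)^j * (Rc d j : ℤ)) * ((-1:ℤ)^(d-k) * (SSc d k : ℤ))) *
        (pA^(2*d-j-k) * pB^j * pC^k))
  + 3 * (∑ j ∈ Finset.range (d+1), ∑ k ∈ Finset.range (d+1),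
      MvPolynomial.C ((-1:ℤ)^d * ((-1:ℤ)^j * (Qc d j : ℤ)) * ((-1:ℤ)^k * (Qc d k : ℤ))) *
        (pA^(2*d-j-k) * pB^j * pC^k))
  + 3 * (∑ j ∈ Finset.range (d+1), ∑ k ∈ Finset.range (d+1),
      MvPolynomial.C (((-1:ℤ)^(d-j) * (QQc d j : ℤ)) * ((-1:ℤ)^k * (Qc d k : ℤ))) *
        (pA^(2*d-j-k) * pB^j * pC^k))
  + 3 * (∑ j ∈ Finset.range (d+1), ∑ k ∈ Finset.range (d+1),
      MvPolynomial.C (((-1:ℤ)^j * (Qc d j : ℤ)) * ((-1:ℤ)^(d-k) * (QQc d k : ℤ))) *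
        (pA^(2*d-j-k) * pB^j * pC^k))
  + (∑ j ∈ Finset.range (d+1), ∑ k ∈ Finset.range (d+1),
      MvPolynomial.C ((-1:ℤ)^d * ((-1:ℤ)^j * (Sc d j : ℤ)) * ((-1:ℤ)^k * (Sc d k : ℤ))) *
        (pA^(2*d-j-k) * pB^j * pC^k))
  + (∑ j ∈ Finset.range (d+1), ∑ k ∈ Finset.range (d+1),
      MvPolynomial.C ((-1:ℤ)^d * ((-1:ℤ)^(j-1) * (SSc d j : ℤ)) * ((-1:ℤ)^k * (Sc d k : ℤ))) *
        (pA^(2*d-j-k) * pB^j * pC^k))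
  + (∑ j ∈ Finset.range (d+1), ∑ k ∈ Finset.range (d+1),
      MvPolynomial.C ((-1:ℤ)^d * ((-1:ℤ)^j * (Sc d j : ℤ)) * ((-1:ℤ)^(k-1) * (SSc d k : ℤ))) *
        (pA^(2*d-j-k) * pB^j * pC^k)) = 0 := by
  have merged : ∑ j ∈ Finset.range (d+1), ∑ k ∈ Finset.range (d+1),
      (MvPolynomial.C ((-1:ℤ)^(d+1) * ((-1:ℤ)^j * (Rc d j : ℤ)) * ((-1:ℤ)^k * (Rc d k : ℤ))) *
        (pA^(2*d-j-k) * pB^j * pC^k)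
      + MvPolynomial.C (((-1:ℤ)^(d-j) * (SSc d j : ℤ)) * ((-1:ℤ)^k * (Rc d k : ℤ))) *
        (pA^(2*d-j-k) * pB^j * pC^k)
      + MvPolynomial.C (((-1:ℤ)^j * (Rc d j : ℤ)) * ((-1:ℤ)^(d-k) * (SSc d k : ℤ))) *
        (pA^(2*d-j-k) * pB^j * pC^k)
      + 3 * (MvPolynomial.C ((-1:ℤ)^d * ((-1:ℤ)^j * (Qc d j : ℤ)) * ((-1:ℤ)^k * (Qc d k : ℤ))) *
        (pA^(2*d-j-k) * pB^j * pC^k))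
      + 3 * (MvPolynomial.C (((-1:ℤ)^(d-j) * (QQc d j : ℤ)) * ((-1:ℤ)^k * (Qc d k : ℤ))) *
        (pA^(2*d-j-k) * pB^j * pC^k))
      + 3 * (MvPolynomial.C (((-1:ℤ)^j * (Qc d j : ℤ)) * ((-1:ℤ)^(d-k) * (QQc d k : ℤ))) *
        (pA^(2*d-j-k) * pB^j * pC^k))
      + MvPolynomial.C ((-1:ℤ)^d * ((-1:ℤ)^j * (Sc d j : ℤ)) * ((-1:ℤ)^k * (Sc d k : ℤ))) *
        (pA^(2*d-j-k) * pB^j * pC^k)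
      + MvPolynomial.C ((-1:ℤ)^d * ((-1:ℤ)^(j-1) * (SSc d j : ℤ)) * ((-1:ℤ)^k * (Sc d k : ℤ))) *
        (pA^(2*d-j-k) * pB^j * pC^k)
      + MvPolynomial.C ((-1:ℤ)^d * ((-1:ℤ)^j * (Sc d j : ℤ)) * ((-1:ℤ)^(k-1) * (SSc d k : ℤ))) *
        (pA^(2*d-j-k) * pB^j * pC^k)) = 0 := by
    refine Finset.sum_eq_zero fun j hj => Finset.sum_eq_zero fun k hk => ?_
    simp only [Finset.mem_range] at hj hk
    have h := totzero d j k hd (by omega) (by omega)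
    have hC := congrArg (MvPolynomial.C (σ := Fin 3)) h
    rw [map_zero] at hC
    simp only [map_add, C3mul] at hC
    linear_combination (pA^(2*d-j-k) * pB^j * pC^k) * hC
  simp only [Finset.sum_add_distrib, ← Finset.mul_sum] at merged
  exact merged

/-- Lemma (l2b): for every positive integer `δ`,
`P_{2δ} + 3A·P_{2δ−1} + (−1)^δ A(A+B+C)·Poly_{δ−1,δ,δ}(A,B)·Poly_{δ−1,δ,δ}(A,C) = 0`
in `ℤ[A,B,C]`. -/
theorem Peven_add_three_A_Podd (δ : ℕ) (hδ : 1 ≤ δ) :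
    Peven δ + 3 * pA * Podd δ +
      MvPolynomial.C ((-1 : ℤ) ^ δ) * pA * (pA + pB + pC) *
        PolyDAB (δ - 1) δ δ pA pB * PolyDAB (δ - 1) δ δ pA pC = 0 := by
  unfold Peven Podd frakPeven frakPodd
  have h1 : MvPolynomial.C ((-1:ℤ)^(δ+1)) * ((PolyDAB δ δ δ pA pB) * (PolyDAB δ δ δ pA pC)) =
    ∑ j ∈ Finset.range (δ+1), ∑ k ∈ Finset.range (δ+1),
      MvPolynomial.C ((-1:ℤ)^(δ+1) * ((-1:ℤ)^j * (Rc δ j : ℤ)) * ((-1:ℤ)^k * (Rc δ k : ℤ))) *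
        (pA^(2*δ-j-k) * pB^j * pC^k) :=
    nf_smul_mul δ ((-1:ℤ)^(δ+1)) _ _ _ _ (nf_R δ pB) (nf_R δ pC)
  have h2 : (pB * PolyDAB (δ-1) δ δ pB pA) * (PolyDAB δ δ δ pA pC) =
    ∑ j ∈ Finset.range (δ+1), ∑ k ∈ Finset.range (δ+1),
      MvPolynomial.C (((-1:ℤ)^(δ-j) * (SSc δ j : ℤ)) * ((-1:ℤ)^k * (Rc δ k : ℤ))) *
        (pA^(2*δ-j-k) * pB^j * pC^k) :=
    nf_mul δ _ _ _ _ (nf_SS δ hδ pB) (nf_R δ pC)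
  have h3 : (PolyDAB δ δ δ pA pB) * (pC * PolyDAB (δ-1) δ δ pC pA) =
    ∑ j ∈ Finset.range (δ+1), ∑ k ∈ Finset.range (δ+1),
      MvPolynomial.C (((-1:ℤ)^j * (Rc δ j : ℤ)) * ((-1:ℤ)^(δ-k) * (SSc δ k : ℤ))) *
        (pA^(2*δ-j-k) * pB^j * pC^k) :=
    nf_mul δ _ _ _ _ (nf_R δ pB) (nf_SS δ hδ pC)
  have h4 : MvPolynomial.C ((-1:ℤ)^δ) * ((pA * PolyDAB (δ-1) δ (δ-1) pA pB) * (pA * PolyDAB (δ-1) δ (δ-1) pA pC)) =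
    ∑ j ∈ Finset.range (δ+1), ∑ k ∈ Finset.range (δ+1),
      MvPolynomial.C ((-1:ℤ)^δ * ((-1:ℤ)^j * (Qc δ j : ℤ)) * ((-1:ℤ)^k * (Qc δ k : ℤ))) *
        (pA^(2*δ-j-k) * pB^j * pC^k) :=
    nf_smul_mul δ ((-1:ℤ)^δ) _ _ _ _ (nf_Q δ hδ pB) (nf_Q δ hδ pC)
  have h5 : (pB * PolyDAB (δ-1) δ (δ-1) pB pA) * (pA * PolyDAB (δ-1) δ (δ-1) pA pC) =
    ∑ j ∈ Finset.range (δ+1), ∑ k ∈ Finset.range (δ+1),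
      MvPolynomial.C (((-1:ℤ)^(δ-j) * (QQc δ j : ℤ)) * ((-1:ℤ)^k * (Qc δ k : ℤ))) *
        (pA^(2*δ-j-k) * pB^j * pC^k) :=
    nf_mul δ _ _ _ _ (nf_QQ δ hδ pB) (nf_Q δ hδ pC)
  have h6 : (pA * PolyDAB (δ-1) δ (δ-1) pA pB) * (pC * PolyDAB (δ-1) δ (δ-1) pC pA) =
    ∑ j ∈ Finset.range (δ+1), ∑ k ∈ Finset.range (δ+1),
      MvPolynomial.C (((-1:ℤ)^j * (Qc δ j : ℤ)) * ((-1:ℤ)^(δ-k) * (QQc δ k : ℤ))) *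
        (pA^(2*δ-j-k) * pB^j * pC^k) :=
    nf_mul δ _ _ _ _ (nf_Q δ hδ pB) (nf_QQ δ hδ pC)
  have h7 : MvPolynomial.C ((-1:ℤ)^δ) * ((pA * PolyDAB (δ-1) δ δ pA pB) * (pA * PolyDAB (δ-1) δ δ pA pC)) =
    ∑ j ∈ Finset.range (δ+1), ∑ k ∈ Finset.range (δ+1),
      MvPolynomial.C ((-1:ℤ)^δ * ((-1:ℤ)^j * (Sc δ j : ℤ)) * ((-1:ℤ)^k * (Sc δ k : ℤ))) *
        (pA^(2*δ-j-k) * pB^j * pC^k) :=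
    nf_smul_mul δ ((-1:ℤ)^δ) _ _ _ _ (nf_S δ hδ pB) (nf_S δ hδ pC)
  have h8 : MvPolynomial.C ((-1:ℤ)^δ) * ((pB * PolyDAB (δ-1) δ δ pA pB) * (pA * PolyDAB (δ-1) δ δ pA pC)) =
    ∑ j ∈ Finset.range (δ+1), ∑ k ∈ Finset.range (δ+1),
      MvPolynomial.C ((-1:ℤ)^δ * ((-1:ℤ)^(j-1) * (SSc δ j : ℤ)) * ((-1:ℤ)^k * (Sc δ k : ℤ))) *
        (pA^(2*δ-j-k) * pB^j * pC^k) :=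
    nf_smul_mul δ ((-1:ℤ)^δ) _ _ _ _ (nf_shift δ hδ pB) (nf_S δ hδ pC)
  have h9 : MvPolynomial.C ((-1:ℤ)^δ) * ((pA * PolyDAB (δ-1) δ δ pA pB) * (pC * PolyDAB (δ-1) δ δ pA pC)) =
    ∑ j ∈ Finset.range (δ+1), ∑ k ∈ Finset.range (δ+1),
      MvPolynomial.C ((-1:ℤ)^δ * ((-1:ℤ)^j * (Sc δ j : ℤ)) * ((-1:ℤ)^(k-1) * (SSc δ k : ℤ))) *
        (pA^(2*δ-j-k) * pB^j * pC^k) :=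
    nf_smul_mul δ ((-1:ℤ)^δ) _ _ _ _ (nf_S δ hδ pB) (nf_shift δ hδ pC)
  have hK : MvPolynomial.C ((-1:ℤ)^δ * ((2*δ).choose δ : ℤ) * ((3*δ).choose δ : ℤ)) * pA^(2*δ)
      + 3 * (pA * (MvPolynomial.C ((-1:ℤ)^(δ+1) * ((2*δ).choose δ : ℤ) *
          ((3*δ-1).choose (δ-1) : ℤ)) * pA^(2*δ-1))) = 0 := by
    have hA : pA * pA^(2*δ-1) = pA^(2*δ) := by
      rw [← pow_succ']
      congr 1
      omega
    have he : (-1:ℤ)^δ * ((2*δ).choose δ : ℤ) * ((3*δ).choose δ : ℤ)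
        = -(3 * ((-1:ℤ)^(δ+1) * ((2*δ).choose δ : ℤ) * ((3*δ-1).choose (δ-1) : ℤ))) := by
      rw [choose3 δ hδ]
      push_cast
      ring
    have hCe : (MvPolynomial.C ((-1:ℤ)^δ * ((2*δ).choose δ : ℤ) * ((3*δ).choose δ : ℤ)) :
        MvPolynomial (Fin 3) ℤ)
        = -(3 * MvPolynomial.C ((-1:ℤ)^(δ+1) * ((2*δ).choose δ : ℤ) *
            ((3*δ-1).choose (δ-1) : ℤ))) := by
      rw [he, map_neg, map_mul, map_ofNat]
    calc MvPolynomial.C ((-1:ℤ)^δ * ((2*δ).choose δ : ℤ) * ((3*δ).choose δ : ℤ)) * pA^(2*δ)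
        + 3 * (pA * (MvPolynomial.C ((-1:ℤ)^(δ+1) * ((2*δ).choose δ : ℤ) *
            ((3*δ-1).choose (δ-1) : ℤ)) * pA^(2*δ-1)))
        = MvPolynomial.C ((-1:ℤ)^δ * ((2*δ).choose δ : ℤ) * ((3*δ).choose δ : ℤ)) * pA^(2*δ)
          + 3 * MvPolynomial.C ((-1:ℤ)^(δ+1) * ((2*δ).choose δ : ℤ) *
            ((3*δ-1).choose (δ-1) : ℤ)) * (pA * pA^(2*δ-1)) := by ring
      _ = 0 := by rw [hA, hCe]; ring
  calc _ = (MvPolynomial.C ((-1:ℤ)^(δ+1)) * ((PolyDAB δ δ δ pA pB) * (PolyDAB δ δ δ pA pC))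
   + (pB * PolyDAB (δ-1) δ δ pB pA) * (PolyDAB δ δ δ pA pC)
   + (PolyDAB δ δ δ pA pB) * (pC * PolyDAB (δ-1) δ δ pC pA)
   + 3 * (MvPolynomial.C ((-1:ℤ)^δ) * ((pA * PolyDAB (δ-1) δ (δ-1) pA pB) * (pA * PolyDAB (δ-1) δ (δ-1) pA pC)))
   + 3 * ((pB * PolyDAB (δ-1) δ (δ-1) pB pA) * (pA * PolyDAB (δ-1) δ (δ-1) pA pC))
   + 3 * ((pA * PolyDAB (δ-1) δ (δ-1) pA pB) * (pC * PolyDAB (δ-1) δ (δ-1) pC pA))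
   + MvPolynomial.C ((-1:ℤ)^δ) * ((pA * PolyDAB (δ-1) δ δ pA pB) * (pA * PolyDAB (δ-1) δ δ pA pC))
   + MvPolynomial.C ((-1:ℤ)^δ) * ((pB * PolyDAB (δ-1) δ δ pA pB) * (pA * PolyDAB (δ-1) δ δ pA pC))
   + MvPolynomial.C ((-1:ℤ)^δ) * ((pA * PolyDAB (δ-1) δ δ pA pB) * (pC * PolyDAB (δ-1) δ δ pA pC)))
   + (MvPolynomial.C ((-1:ℤ)^δ * ((2*δ).choose δ : ℤ) * ((3*δ).choose δ : ℤ)) * pA^(2*δ)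
      + 3 * (pA * (MvPolynomial.C ((-1:ℤ)^(δ+1) * ((2*δ).choose δ : ℤ) * ((3*δ-1).choose (δ-1) : ℤ)) * pA^(2*δ-1)))) := by ring
    _ = 0 := by
        rw [h1, h2, h3, h4, h5, h6, h7, h8, h9, bigsum δ hδ, zero_add]
        exact hK

end
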